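/- Let c be symmetric nonnegative edge costs on the complete graph with N ≥ 3 vertices satisfying the triangle inequality c_{kv} + c_{uv} ≥ c_{ku} for all triples of distinct vertices u, k, v. Then: (i) there exists α₀ (depending on N) such that for every α ≥ α₀ an optimal CST at parameter α is a star tree; and (ii) for every fixed α > 1 there exists N₀ such that for all N ≥ N₀ and all such cost configurations, an optimal CST at parameter α is a star tree. -/

import Mathlib

open Classical

/-- `mu G i j` : the number of vertices in the connected component of `i` in the graph `G`
with the edge `{i, j}` removed, divided by `N`. -/
noncomputable def mu {N : ℕ} (G : SimpleGraph (Fin N)) (i j : Fin N) : ℝ :=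
  (((G.deleteEdges {s(i, j)}).connectedComponentMk i).supp.ncard : ℝ) / N

/-- The CST cost of a graph `G` with edge costs `c` at parameter `α`. -/
noncomputable def cstCost {N : ℕ} (G : SimpleGraph (Fin N)) (c : Fin N → Fin N → ℝ)
    (α : ℝ) : ℝ :=
  (1 / 2) * ∑ i, ∑ j, if G.Adj i j then (mu G i j * (1 - mu G i j)) ^ α * c i j else 0

/-- The star tree centered at `u`. -/
def starGraph {N : ℕ} (u : Fin N) : SimpleGraph (Fin N) :=
  SimpleGraph.fromRel (fun i _ => i = u)

open SimpleGraph hiding starGraph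

/-- The vertex set on the `a` side of edge `{a,b}`. -/
def sideSet {N : ℕ} (H : SimpleGraph (Fin N)) (a b : Fin N) : Set (Fin N) :=
  ((H.deleteEdges {s(a, b)}).connectedComponentMk a).supp

lemma mem_sideSet {N : ℕ} {H : SimpleGraph (Fin N)} {a b x : Fin N} :
    x ∈ sideSet H a b ↔ (H.deleteEdges {s(a, b)}).Reachable x a := by
  rw [sideSet, ConnectedComponent.mem_supp_iff, ConnectedComponent.eq]

lemma mem_sideSet' {N : ℕ} {H : SimpleGraph (Fin N)} {a b x : Fin N} :
    x ∈ sideSet H b a ↔ (H.deleteEdges {s(a, b)}).Reachable x b := by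
  rw [mem_sideSet, Sym2.eq_swap]

lemma mu_eq {N : ℕ} (H : SimpleGraph (Fin N)) (a b : Fin N) :
    mu H a b = ((sideSet H a b).ncard : ℝ) / N := rfl

lemma reach_or_aux {N : ℕ} {H : SimpleGraph (Fin N)} {a b x t : Fin N}
    (w : H.Walk x t) :
    (H.deleteEdges {s(a, b)}).Reachable x t ∨ (H.deleteEdges {s(a, b)}).Reachable x a ∨
      (H.deleteEdges {s(a, b)}).Reachable x b := by
  induction w with
  | nil => exact Or.inl (Reachable.refl _)
  | @cons x y t h w ih =>
    by_cases he : s(x, y) = s(a, b)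
    · rw [Sym2.eq_iff] at he
      rcases he with ⟨rfl, rfl⟩ | ⟨rfl, rfl⟩
      · exact Or.inr (Or.inl (Reachable.refl _))
      · exact Or.inr (Or.inr (Reachable.refl _))
    · have hxy : (H.deleteEdges {s(a, b)}).Reachable x y :=
        ⟨Walk.cons (by simp [h, he, SimpleGraph.deleteEdges_adj]) Walk.nil⟩
      rcases ih with ih | ih | ih
      · exact Or.inl (hxy.trans ih)
      · exact Or.inr (Or.inl (hxy.trans ih))
      · exact Or.inr (Or.inr (hxy.trans ih))

lemma sideSet_mem_or {N : ℕ} {H : SimpleGraph (Fin N)} (hc : H.Connected)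
    {a b : Fin N} (x : Fin N) : x ∈ sideSet H a b ∨ x ∈ sideSet H b a := by
  obtain ⟨w⟩ := hc.preconnected x a
  rw [mem_sideSet, mem_sideSet']
  rcases reach_or_aux (a := a) (b := b) w with h | h | h
  · exact Or.inl h
  · exact Or.inl h
  · exact Or.inr h

lemma not_reach_of_acyclic {N : ℕ} {H : SimpleGraph (Fin N)} (hac : H.IsAcyclic)
    {a b : Fin N} (hab : H.Adj a b) : ¬ (H.deleteEdges {s(a, b)}).Reachable a b :=
  isBridge_iff.mp (isAcyclic_iff_forall_adj_isBridge.mp hac hab)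

lemma sideSet_disj {N : ℕ} {H : SimpleGraph (Fin N)} (hac : H.IsAcyclic)
    {a b x : Fin N} (hab : H.Adj a b) (hx : x ∈ sideSet H a b) : x ∉ sideSet H b a := by
  rw [mem_sideSet] at hx
  rw [mem_sideSet']
  intro hx'
  exact not_reach_of_acyclic hac hab (hx.symm.trans hx')

lemma sideSet_ncard_add {N : ℕ} {H : SimpleGraph (Fin N)} (hT : H.IsTree)
    {a b : Fin N} (hab : H.Adj a b) :
    (sideSet H a b).ncard + (sideSet H b a).ncard = N := by
  classical
  rw [Set.ncard_eq_toFinset_card', Set.ncard_eq_toFinset_card']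
  rw [← Finset.card_union_of_disjoint]
  · have : (sideSet H a b).toFinset ∪ (sideSet H b a).toFinset = Finset.univ := by
      ext x
      simp only [Finset.mem_union, Set.mem_toFinset, Finset.mem_univ, iff_true]
      exact sideSet_mem_or hT.isConnected x
    rw [this, Finset.card_univ, Fintype.card_fin]
  · rw [Finset.disjoint_left]
    intro x hx hx'
    rw [Set.mem_toFinset] at hx hx'
    exact sideSet_disj hT.IsAcyclic hab hx hx'

noncomputable def wcost {N : ℕ} (c : Fin N → Fin N → ℝ) {H : SimpleGraph (Fin N)}
    {x y : Fin N} (w : H.Walk x y) : ℝ :=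
  (w.darts.map (fun d => c d.toProd.1 d.toProd.2)).sum

lemma wcost_nonneg {N : ℕ} {c : Fin N → Fin N → ℝ} (hpos : ∀ i j, 0 ≤ c i j)
    {H : SimpleGraph (Fin N)} {x y : Fin N} (w : H.Walk x y) : 0 ≤ wcost c w := by
  apply List.sum_nonneg
  intro r hr
  obtain ⟨d, _, rfl⟩ := List.mem_map.mp hr
  exact hpos _ _

lemma cost_le_wcost {N : ℕ} {c : Fin N → Fin N → ℝ} (hsym : ∀ i j, c i j = c j i)
    (hpos : ∀ i j, 0 ≤ c i j)
    (htri : ∀ u k v : Fin N, u ≠ k → u ≠ v → k ≠ v → c k u ≤ c k v + c u v)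
    {H : SimpleGraph (Fin N)} {x y : Fin N} (hxy : x ≠ y) (w : H.Walk x y) :
    c x y ≤ wcost c w := by
  induction w with
  | nil => exact absurd rfl hxy
  | @cons x z y h w ih =>
    have hw : wcost c (Walk.cons h w) = c x z + wcost c w := by
      simp [wcost, Walk.darts_cons]
    rw [hw]
    by_cases hzy : z = y
    · subst hzy
      have := wcost_nonneg hpos w
      linarith
    · have h1 : c x y ≤ c x z + c y z := htri y x z hxy.symm (Ne.symm hzy) h.ne
      have h2 : c z y ≤ wcost c w := ih hzy
      rw [hsym y z] at h1
      linarith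

lemma no_fst_end {N : ℕ} {H : SimpleGraph (Fin N)} {x t : Fin N} (q : H.Walk x t)
    (hq : q.support.count t = 1) {d : H.Dart} (hd : d ∈ q.darts) : d.toProd.1 ≠ t := by
  have hmem : d.toProd.1 ∈ q.support.dropLast := by
    rw [← Walk.map_fst_darts]
    exact List.mem_map_of_mem hd
  intro hdt
  rw [hdt] at hmem
  have hne : q.support ≠ [] := by simp
  have hsplit : q.support.dropLast ++ [t] = q.support := by
    have := List.dropLast_append_getLast hne
    rwa [q.getLast_support] at this
  have : (q.support.dropLast ++ [t]).count t = 1 := by rw [hsplit]; exact hq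
  rw [List.count_append] at this
  simp at this
  exact (List.count_eq_zero.mp this) hmem

lemma dart_not_far {N : ℕ} {H : SimpleGraph (Fin N)} (hT : H.IsTree) {u j a b : Fin N}
    {p : H.Walk u j} (hp : p.IsPath) (hu : u ∈ sideSet H b a)
    (hd : (a, b) ∈ p.darts.map SimpleGraph.Dart.toProd) : False := by
  obtain ⟨d, hdm, hdp⟩ := List.mem_map.mp hd
  have hadj : H.Adj a b := by
    have := d.adj
    rwa [show d.toProd.1 = a by rw [hdp], show d.toProd.2 = b by rw [hdp]] at this
  have ha : a ∈ p.support := by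
    have := p.dart_fst_mem_support_of_mem_darts hdm
    rwa [show d.toProd.1 = a by rw [hdp]] at this
  set q := p.takeUntil a ha with hqdef
  have hcount : q.support.count a = 1 := p.count_support_takeUntil_eq_one ha
  have hq_no_e : s(a, b) ∉ q.edges := by
    intro he
    obtain ⟨d', hd'm, hd'e⟩ := List.mem_map.mp (he : s(a,b) ∈ q.darts.map Dart.edge)
    have hfst : d'.toProd.1 ≠ a := no_fst_end q hcount hd'm
    have : d'.toProd = (a, b) ∨ d'.toProd = (b, a) := dart_edge_eq_mk'_iff.mp hd'e
    rcases this with h' | h'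
    · exact hfst (by rw [h'])
    · -- d' has toProd (b,a), and d has (a,b); both have edge s(a,b): contradict nodup edges
      have hnd : (p.darts.map Dart.edge).Nodup := hp.isTrail.edges_nodup
      have hd'p : d' ∈ p.darts := p.darts_takeUntil_subset ha hd'm
      have heq : d = d' := List.inj_on_of_nodup_map hnd hdm hd'p
        (by rw [Dart.edge, Dart.edge, hdp, h']; exact Sym2.eq_swap)
      rw [heq, h'] at hdp
      exact hadj.ne (Prod.ext_iff.mp hdp).1.symm
  have hsub : ∀ e ∈ q.edges, e ∈ (H.deleteEdges {s(a, b)}).edgeSet := by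
    intro e he
    rw [edgeSet_deleteEdges]
    refine ⟨q.edges_subset_edgeSet he, fun hee => ?_⟩
    rw [Set.mem_singleton_iff] at hee
    exact hq_no_e (hee ▸ he)
  have : (H.deleteEdges {s(a, b)}).Reachable u a := ⟨q.transfer _ hsub⟩
  exact sideSet_disj hT.IsAcyclic hadj (mem_sideSet.mpr this) hu

lemma far_of_edge {N : ℕ} {H : SimpleGraph (Fin N)} (hT : H.IsTree) {u j a b : Fin N}
    (hadj : H.Adj a b) {p : H.Walk u j} (hp : p.IsPath) (hu : u ∈ sideSet H a b)
    (he : s(a, b) ∈ p.edges) : j ∈ sideSet H b a := by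
  rcases sideSet_mem_or hT.isConnected j (a := a) (b := b) with hj | hj
  · exfalso
    have hru : (H.deleteEdges {s(a, b)}).Reachable u a := mem_sideSet.mp hu
    have hrj : (H.deleteEdges {s(a, b)}).Reachable j a := mem_sideSet.mp hj
    have hruj : (H.deleteEdges {s(a, b)}).Reachable u j := hru.trans hrj.symm
    obtain ⟨W⟩ := hruj
    have hPpath := W.bypass_isPath
    have hsub : ∀ e ∈ W.bypass.edges, e ∈ H.edgeSet := by
      intro e hee
      have := W.bypass.edges_subset_edgeSet hee
      rw [edgeSet_deleteEdges] at this
      exact this.1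
    set P' := W.bypass.transfer H hsub with hP'
    have hP'path : P'.IsPath := hPpath.transfer hsub
    have hune : (⟨p, hp⟩ : H.Path u j) = ⟨P', hP'path⟩ := hT.IsAcyclic.path_unique _ _
    have hpe : p = P' := congrArg Subtype.val hune
    rw [hpe] at he
    rw [hP', Walk.edges_transfer] at he
    have := W.bypass.edges_subset_edgeSet he
    rw [edgeSet_deleteEdges] at this
    exact this.2 rfl
  · exact hj

/-- centroid of a tree -/
lemma exists_centroid {N : ℕ} {H : SimpleGraph (Fin N)} (hT : H.IsTree) (hN : 0 < N) :
    ∃ u : Fin N, ∀ a b, H.Adj a b → u ∈ sideSet H a b →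
      2 * (sideSet H b a).ncard ≤ N := by
  classical
  have : Nonempty (Fin N) := ⟨⟨0, hN⟩⟩
  obtain ⟨u, -, hmin⟩ := Finset.exists_min_image Finset.univ
    (fun x => ∑ j, H.dist x j) Finset.univ_nonempty
  refine ⟨u, fun a b hadj hu => ?_⟩
  have hub : u ≠ b := by
    rintro rfl
    exact sideSet_disj hT.IsAcyclic hadj hu (mem_sideSet'.mpr (Reachable.refl _))
  -- the first step of the path from u to b
  obtain ⟨W0⟩ := hT.isConnected.preconnected u b
  obtain ⟨v, huv, P', hPeq⟩ := Walk.exists_eq_cons_of_ne hub W0.bypass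
  have hPpath : W0.bypass.IsPath := W0.bypass_isPath
  rw [hPeq, Walk.cons_isPath_iff] at hPpath
  obtain ⟨hP'path, huP'⟩ := hPpath
  have hP'nouv : ∀ e ∈ P'.edges, e ∈ (H.deleteEdges {s(u, v)}).edgeSet := by
    intro e he
    rw [edgeSet_deleteEdges]
    refine ⟨P'.edges_subset_edgeSet he, fun hee => ?_⟩
    rw [Set.mem_singleton_iff] at hee
    subst hee
    exact huP' (P'.fst_mem_support_of_mem_edges he)
  -- Claim 1 : sideSet H b a ⊆ sideSet H v u
  have hsubset : sideSet H b a ⊆ sideSet H v u := by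
    intro j hj
    obtain ⟨Wj⟩ := (mem_sideSet'.mp hj).symm
    have huWj : u ∉ Wj.support := by
      intro husup
      have : (H.deleteEdges {s(a, b)}).Reachable u b := ⟨(Wj.takeUntil u husup).reverse⟩
      exact sideSet_disj hT.IsAcyclic hadj hu (mem_sideSet'.mpr this)
    have hWjsub : ∀ e ∈ Wj.edges, e ∈ (H.deleteEdges {s(u, v)}).edgeSet := by
      intro e he
      rw [edgeSet_deleteEdges]
      have h1 := Wj.edges_subset_edgeSet he
      rw [edgeSet_deleteEdges] at h1
      refine ⟨h1.1, fun hee => ?_⟩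
      rw [Set.mem_singleton_iff] at hee
      subst hee
      exact huWj (Wj.fst_mem_support_of_mem_edges he)
    exact mem_sideSet'.mpr ⟨((P'.transfer _ hP'nouv).append (Wj.transfer _ hWjsub)).reverse⟩
  -- Claim 2 : the side of v has at most N/2 vertices
  have hdistuv : H.dist u v = 1 := by
    rw [SimpleGraph.dist_eq_one_iff_adj]; exact huv
  have hKa : ∀ j ∈ sideSet H v u, H.dist v j + 1 ≤ H.dist u j := by
    intro j hj
    obtain ⟨Wd, hWd⟩ := hT.isConnected.exists_walk_length_eq_dist u j
    have hvWd : v ∈ Wd.support := by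
      by_contra hnv
      have hWdsub : ∀ e ∈ Wd.edges, e ∈ (H.deleteEdges {s(u, v)}).edgeSet := by
        intro e he
        rw [edgeSet_deleteEdges]
        refine ⟨Wd.edges_subset_edgeSet he, fun hee => ?_⟩
        rw [Set.mem_singleton_iff] at hee
        subst hee
        exact hnv (Wd.snd_mem_support_of_mem_edges he)
      have hr1 : (H.deleteEdges {s(u, v)}).Reachable u j := ⟨Wd.transfer _ hWdsub⟩
      have hr2 : (H.deleteEdges {s(u, v)}).Reachable j v := mem_sideSet'.mp hj
      exact not_reach_of_acyclic hT.IsAcyclic huv (hr1.trans hr2)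
    have hsplit := Wd.take_spec hvWd
    have hlen : (Wd.takeUntil v hvWd).length + (Wd.dropUntil v hvWd).length = Wd.length := by
      rw [← Walk.length_append, hsplit]
    have h1 : H.dist u v ≤ (Wd.takeUntil v hvWd).length := SimpleGraph.dist_le _
    have h2 : H.dist v j ≤ (Wd.dropUntil v hvWd).length := SimpleGraph.dist_le _
    omega
  have hKb : ∀ j, H.dist v j ≤ H.dist u j + 1 := by
    intro j
    have := hT.isConnected.dist_triangle (u := v) (v := u) (w := j)
    rwa [SimpleGraph.dist_comm (u := v) (v := u), hdistuv, add_comm] at this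
  set Kf := (sideSet H v u).toFinset with hKf
  have hsum1 : ∑ j ∈ Kf, (H.dist v j + 1) ≤ ∑ j ∈ Kf, H.dist u j := by
    apply Finset.sum_le_sum
    intro j hj
    exact hKa j (by rwa [hKf, Set.mem_toFinset] at hj)
  have hsum2 : ∑ j ∈ Kfᶜ, H.dist v j ≤ ∑ j ∈ Kfᶜ, (H.dist u j + 1) := by
    apply Finset.sum_le_sum
    intro j _
    exact hKb j
  have hotot : ∑ j ∈ Kf, H.dist v j + ∑ j ∈ Kfᶜ, H.dist v j = ∑ j, H.dist v j :=
    Finset.sum_add_sum_compl Kf _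
  have hotot' : ∑ j ∈ Kf, H.dist u j + ∑ j ∈ Kfᶜ, H.dist u j = ∑ j, H.dist u j :=
    Finset.sum_add_sum_compl Kf _
  have hc1 : ∑ j ∈ Kf, (H.dist v j + 1) = ∑ j ∈ Kf, H.dist v j + Kf.card := by
    rw [Finset.sum_add_distrib, Finset.sum_const, smul_eq_mul, mul_one]
  have hc2 : ∑ j ∈ Kfᶜ, (H.dist u j + 1) = ∑ j ∈ Kfᶜ, H.dist u j + Kfᶜ.card := by
    rw [Finset.sum_add_distrib, Finset.sum_const, smul_eq_mul, mul_one]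
  have hmin' : ∑ j, H.dist u j ≤ ∑ j, H.dist v j := hmin v (Finset.mem_univ v)
  have hcard : Kfᶜ.card = N - Kf.card := by
    rw [Finset.card_compl, Fintype.card_fin]
  have hcard_le : Kf.card ≤ N := by
    calc Kf.card ≤ Finset.univ.card := Finset.card_le_card (Finset.subset_univ _)
    _ = N := by rw [Finset.card_univ, Fintype.card_fin]
  have h2K : 2 * Kf.card ≤ N := by omega
  have hKcard : (sideSet H v u).ncard = Kf.card := Set.ncard_eq_toFinset_card' _
  have hle : (sideSet H b a).ncard ≤ (sideSet H v u).ncard :=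
    Set.ncard_le_ncard hsubset (Set.toFinite _)
  omega

lemma mem_sideSet_self {N : ℕ} {H : SimpleGraph (Fin N)} {a b : Fin N} :
    a ∈ sideSet H a b := mem_sideSet.mpr (Reachable.refl _)

lemma mu_pair {N : ℕ} {H : SimpleGraph (Fin N)} (hT : H.IsTree) (hN : 0 < N)
    {a b : Fin N} (hab : H.Adj a b) :
    mu H a b = ((sideSet H a b).ncard : ℝ) / N ∧
    1 - mu H a b = ((sideSet H b a).ncard : ℝ) / N := by
  have hNR : (0:ℝ) < N := by exact_mod_cast hN
  have hadd := sideSet_ncard_add hT hab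
  constructor
  · rfl
  · rw [mu_eq]
    have : ((sideSet H a b).ncard : ℝ) + ((sideSet H b a).ncard : ℝ) = N := by
      exact_mod_cast congrArg (Nat.cast : ℕ → ℝ) hadd
    field_simp
    linarith

/-- symmetric weight of adjacent pair -/
lemma weight_symm {N : ℕ} {H : SimpleGraph (Fin N)} (hT : H.IsTree) (hN : 0 < N)
    {a b : Fin N} (hab : H.Adj a b) :
    mu H b a * (1 - mu H b a) = mu H a b * (1 - mu H a b) := by
  obtain ⟨h1, h2⟩ := mu_pair hT hN hab
  obtain ⟨h3, h4⟩ := mu_pair hT hN hab.symm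
  have e1 : mu H b a = 1 - mu H a b := by rw [h3, ← h2]
  rw [e1]; ring

lemma cst_halfsum {N : ℕ} {H : SimpleGraph (Fin N)} (hT : H.IsTree) (hN : 0 < N)
    {c : Fin N → Fin N → ℝ} (hsym : ∀ i j, c i j = c j i) (u : Fin N) (α : ℝ) :
    cstCost H c α = ∑ i, ∑ j, if H.Adj i j ∧ u ∈ sideSet H i j then
      (mu H i j * (1 - mu H i j)) ^ α * c i j else 0 := by
  classical
  have hsplit : ∀ i j, (if H.Adj i j then (mu H i j * (1 - mu H i j)) ^ α * c i j else 0) =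
      (if H.Adj i j ∧ u ∈ sideSet H i j then (mu H i j * (1 - mu H i j)) ^ α * c i j else 0) +
      (if H.Adj i j ∧ u ∈ sideSet H j i then (mu H i j * (1 - mu H i j)) ^ α * c i j else 0) := by
    intro i j
    by_cases hadj : H.Adj i j
    · rcases sideSet_mem_or hT.isConnected u (a := i) (b := j) with hmem | hmem
      · rw [if_pos hadj, if_pos ⟨hadj, hmem⟩, if_neg, add_zero]
        rintro ⟨-, hmem'⟩
        exact sideSet_disj hT.IsAcyclic hadj hmem hmem'
      · have h1 : ¬(H.Adj i j ∧ u ∈ sideSet H i j) := by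
          rintro ⟨-, hmem'⟩
          exact sideSet_disj hT.IsAcyclic hadj.symm hmem hmem'
        rw [if_pos hadj, if_neg h1, if_pos ⟨hadj, hmem⟩, zero_add]
    · simp [hadj]
  have hswap : ∑ i, ∑ j, (if H.Adj i j ∧ u ∈ sideSet H j i then
        (mu H i j * (1 - mu H i j)) ^ α * c i j else 0) =
      ∑ i, ∑ j, (if H.Adj i j ∧ u ∈ sideSet H i j then
        (mu H i j * (1 - mu H i j)) ^ α * c i j else 0) := by
    rw [Finset.sum_comm]
    apply Finset.sum_congr rfl; intro i _
    apply Finset.sum_congr rfl; intro j _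
    by_cases hadj : H.Adj i j
    · by_cases hmem : u ∈ sideSet H i j
      · rw [if_pos ⟨hadj.symm, hmem⟩, if_pos ⟨hadj, hmem⟩,
          weight_symm hT hN hadj.symm, hsym j i]
      · rw [if_neg, if_neg]
        · rintro ⟨-, h⟩; exact hmem h
        · rintro ⟨-, h⟩; exact hmem h
    · rw [if_neg, if_neg]
      · rintro ⟨h, -⟩; exact hadj h
      · rintro ⟨h, -⟩; exact hadj h.symm
  rw [cstCost]
  conv_lhs => rw [show (∑ i, ∑ j, if H.Adj i j then (mu H i j * (1 - mu H i j)) ^ α * c i j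
    else 0) = ∑ i, ∑ j, ((if H.Adj i j ∧ u ∈ sideSet H i j then
      (mu H i j * (1 - mu H i j)) ^ α * c i j else 0) +
      (if H.Adj i j ∧ u ∈ sideSet H j i then (mu H i j * (1 - mu H i j)) ^ α * c i j else 0))
    from Finset.sum_congr rfl fun i _ => Finset.sum_congr rfl fun j _ => hsplit i j]
  rw [show (∑ i, ∑ j, ((if H.Adj i j ∧ u ∈ sideSet H i j then
      (mu H i j * (1 - mu H i j)) ^ α * c i j else 0) +
      (if H.Adj i j ∧ u ∈ sideSet H j i then (mu H i j * (1 - mu H i j)) ^ α * c i j else 0)))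
    = (∑ i, ∑ j, (if H.Adj i j ∧ u ∈ sideSet H i j then
      (mu H i j * (1 - mu H i j)) ^ α * c i j else 0)) +
      ∑ i, ∑ j, (if H.Adj i j ∧ u ∈ sideSet H j i then
      (mu H i j * (1 - mu H i j)) ^ α * c i j else 0) by
    rw [← Finset.sum_add_distrib]
    exact Finset.sum_congr rfl fun i _ => Finset.sum_add_distrib]
  rw [hswap]; ring

lemma star_adj {N : ℕ} {u i j : Fin N} :
    (starGraph u).Adj i j ↔ i ≠ j ∧ (i = u ∨ j = u) := by
  simp [starGraph]

lemma star_reach_isolated {N : ℕ} {u x y : Fin N} (hx : x ≠ u)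
    (h : ((starGraph u).deleteEdges {s(u, x)}).Reachable x y) : x = y := by
  obtain ⟨w⟩ := h
  cases w with
  | nil => rfl
  | cons h w =>
    exfalso
    rw [deleteEdges_adj] at h
    obtain ⟨hadj, hne⟩ := h
    rw [star_adj] at hadj
    rcases hadj.2 with rfl | rfl
    · exact hx rfl
    · exact hne (by rw [Sym2.eq_swap]; exact Set.mem_singleton _)

lemma star_connected {N : ℕ} (hN : 0 < N) (u : Fin N) : (starGraph u).Connected := by
  rw [connected_iff]
  refine ⟨fun x y => ?_, ⟨⟨0, hN⟩⟩⟩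
  have key : ∀ z : Fin N, (starGraph u).Reachable z u := by
    intro z
    by_cases hz : z = u
    · exact hz ▸ Reachable.refl z
    · exact ⟨Walk.cons (star_adj.mpr ⟨hz, Or.inr rfl⟩) Walk.nil⟩
  exact (key x).trans (key y).symm

lemma star_acyclic {N : ℕ} (u : Fin N) : (starGraph u).IsAcyclic := by
  rw [isAcyclic_iff_forall_adj_isBridge]
  intro a b hadj
  rw [isBridge_iff]
  refine fun hreach => ?_
  have hab : a ≠ b := hadj.ne
  rcases star_adj.mp hadj with ⟨-, rfl | rfl⟩
  · -- a = u ; b is isolated in star minus s(u,b)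
    have := star_reach_isolated (u := a) (x := b) (Ne.symm hab) hreach.symm
    exact hab this.symm
  · -- b = u ; a is isolated
    have : s(a, b) = s(b, a) := Sym2.eq_swap
    rw [this] at hreach
    exact hab (star_reach_isolated (u := b) (x := a) hab hreach)

lemma star_tree {N : ℕ} (hN : 0 < N) (u : Fin N) : (starGraph u).IsTree :=
  ⟨star_connected hN u, star_acyclic u⟩

lemma star_sideSet {N : ℕ} {u x : Fin N} (hx : x ≠ u) :
    sideSet (starGraph u) x u = {x} := by
  ext y
  rw [Set.mem_singleton_iff, mem_sideSet]
  constructor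
  · intro h
    have : s(x, u) = s(u, x) := Sym2.eq_swap
    rw [this] at h
    exact (star_reach_isolated hx h.symm).symm
  · rintro rfl
    exact Reachable.refl _

lemma star_weight {N : ℕ} (hN : 0 < N) {u x : Fin N} (hx : x ≠ u) :
    mu (starGraph u) u x * (1 - mu (starGraph u) u x) = ((N : ℝ) - 1) / N ^ 2 := by
  have hadj : (starGraph u).Adj u x := star_adj.mpr ⟨Ne.symm hx, Or.inl rfl⟩
  obtain ⟨h1, h2⟩ := mu_pair (star_tree hN u) hN hadj
  have hcx : (sideSet (starGraph u) x u).ncard = 1 := by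
    rw [star_sideSet hx]; simp
  have hcu : (sideSet (starGraph u) u x).ncard = N - 1 := by
    have := sideSet_ncard_add (star_tree hN u) hadj
    omega
  have h1N : (1:ℕ) ≤ N := hN
  have hc : ((N - 1 : ℕ) : ℝ) = (N : ℝ) - 1 := by
    push_cast [Nat.cast_sub h1N]; ring
  rw [h2, h1, hcx, hcu, hc, Nat.cast_one, div_mul_div_comm, mul_one, ← sq]

lemma star_cost {N : ℕ} (hN : 0 < N) (u : Fin N) {c : Fin N → Fin N → ℝ}
    (hsym : ∀ i j, c i j = c j i) (α : ℝ) :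
    cstCost (starGraph u) c α =
      (((N : ℝ) - 1) / N ^ 2) ^ α * ∑ j ∈ Finset.univ.erase u, c u j := by
  rw [cst_halfsum (star_tree hN u) hN hsym u α]
  have hpt : ∀ i j : Fin N, (if (starGraph u).Adj i j ∧ u ∈ sideSet (starGraph u) i j then
      (mu (starGraph u) i j * (1 - mu (starGraph u) i j)) ^ α * c i j else 0) =
      (if i = u ∧ j ≠ u then (((N : ℝ) - 1) / N ^ 2) ^ α * c i j else 0) := by
    intro i j
    by_cases hiu : i = u
    · subst hiu
      by_cases hju : j ≠ i
      · rw [if_pos ⟨star_adj.mpr ⟨Ne.symm hju, Or.inl rfl⟩, mem_sideSet_self⟩,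
          if_pos ⟨rfl, hju⟩, star_weight hN hju]
      · push_neg at hju
        subst hju
        rw [if_neg, if_neg]
        · rintro ⟨-, h⟩; exact h rfl
        · rintro ⟨h, -⟩; exact h.ne rfl
    · rw [if_neg, if_neg]
      · rintro ⟨h, -⟩; exact hiu h
      · rintro ⟨hadj, hmem⟩
        rcases star_adj.mp hadj with ⟨hne, rfl | rfl⟩
        · exact hiu rfl
        · -- j = u, i ≠ u : u ∉ sideSet star i u since i isolated
          rw [mem_sideSet] at hmem
          have : s(i, j) = s(j, i) := Sym2.eq_swap
          rw [this] at hmem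
          exact hne (star_reach_isolated hne hmem.symm)
  have step1 : (∑ i, ∑ j, if (starGraph u).Adj i j ∧ u ∈ sideSet (starGraph u) i j then
      (mu (starGraph u) i j * (1 - mu (starGraph u) i j)) ^ α * c i j else 0) =
      ∑ i, ∑ j, (if i = u ∧ j ≠ u then (((N : ℝ) - 1) / N ^ 2) ^ α * c i j else 0) :=
    Finset.sum_congr rfl fun i _ => Finset.sum_congr rfl fun j _ => hpt i j
  have step2 : (∑ i, ∑ j, if i = u ∧ j ≠ u then (((N : ℝ) - 1) / N ^ 2) ^ α * c i j else 0) =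
      ∑ i, (if i = u then ∑ j, (if j ≠ u then (((N : ℝ) - 1) / N ^ 2) ^ α * c i j else 0)
        else 0) := by
    apply Finset.sum_congr rfl
    intro i _
    by_cases hiu : i = u
    · subst hiu
      rw [if_pos rfl]
      apply Finset.sum_congr rfl
      intro j _
      by_cases hju : j ≠ i
      · rw [if_pos ⟨rfl, hju⟩, if_pos hju]
      · rw [if_neg (fun h => hju h.2), if_neg hju]
    · rw [if_neg hiu]
      exact Finset.sum_eq_zero fun j _ => if_neg (fun h => hiu h.1)
  rw [step1, step2, Finset.sum_ite_eq' Finset.univ u, if_pos (Finset.mem_univ u)]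
  rw [← Finset.sum_filter, Finset.filter_ne' Finset.univ u, Finset.mul_sum]

lemma wcost_eq {N : ℕ} (c : Fin N → Fin N → ℝ) {H : SimpleGraph (Fin N)}
    {x y : Fin N} {p : H.Walk x y} (hp : p.IsPath) :
    wcost c p = ∑ i, ∑ i', if (i, i') ∈ p.darts.map SimpleGraph.Dart.toProd
      then c i i' else 0 := by
  classical
  have hinjd : Function.Injective (SimpleGraph.Dart.toProd (G := H)) := fun d d' h =>
    SimpleGraph.Dart.ext _ _ h
  have hnd : (p.darts.map SimpleGraph.Dart.toProd).Nodup :=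
    (Walk.darts_nodup_of_support_nodup hp.support_nodup).map hinjd
  have h1 : wcost c p = ((p.darts.map SimpleGraph.Dart.toProd).map
      (fun q : Fin N × Fin N => c q.1 q.2)).sum := by
    rw [wcost, List.map_map]
    rfl
  have h2 : ((p.darts.map SimpleGraph.Dart.toProd).map
      (fun q : Fin N × Fin N => c q.1 q.2)).sum =
      ∑ q ∈ (p.darts.map SimpleGraph.Dart.toProd).toFinset, c q.1 q.2 :=
    (List.sum_toFinset _ hnd).symm
  have h3 : (p.darts.map SimpleGraph.Dart.toProd).toFinset =
      (Finset.univ ×ˢ Finset.univ).filter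
        (fun q : Fin N × Fin N => q ∈ p.darts.map SimpleGraph.Dart.toProd) := by
    ext q
    simp [List.mem_toFinset]
  rw [h1, h2, h3, Finset.sum_filter]
  rw [Finset.sum_product]

lemma star_le_tree {N : ℕ} (hN3 : 3 ≤ N) {α : ℝ}
    (hkey : ∀ k m : ℕ, 1 ≤ k → 1 ≤ m → k + m = N → 2 * m ≤ N →
      (((N:ℝ) - 1) / (N:ℝ) ^ 2) ^ α * m ≤ (((k:ℝ) * (m:ℝ)) / (N:ℝ) ^ 2) ^ α)
    {c : Fin N → Fin N → ℝ} (hsym : ∀ i j, c i j = c j i) (hpos : ∀ i j, 0 ≤ c i j)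
    (htri : ∀ u k v : Fin N, u ≠ k → u ≠ v → k ≠ v → c k u ≤ c k v + c u v)
    {H : SimpleGraph (Fin N)} (hT : H.IsTree) :
    ∃ u : Fin N, cstCost (starGraph u) c α ≤ cstCost H c α := by
  classical
  have hN : 0 < N := by omega
  have hNR : (1:ℝ) ≤ N := by exact_mod_cast hN
  obtain ⟨u, hcent⟩ := exists_centroid hT hN
  refine ⟨u, ?_⟩
  set K : ℝ := (((N:ℝ) - 1) / (N:ℝ) ^ 2) ^ α with hKdef
  have hK0 : 0 ≤ K := Real.rpow_nonneg (div_nonneg (by linarith) (by positivity)) α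
  -- paths from u
  set p : ∀ j : Fin N, H.Walk u j :=
    fun j => ((hT.isConnected.preconnected u j).some).bypass with hpdef
  have hppath : ∀ j, (p j).IsPath := fun j => Walk.bypass_isPath _
  -- counting function
  set cnt : Fin N → Fin N → ℕ := fun i i' =>
    ((Finset.univ.erase u).filter
      (fun j => (i, i') ∈ (p j).darts.map SimpleGraph.Dart.toProd)).card with hcnt
  -- Step B+C : sum of costs from the center bounded by weighted edge counts
  have stepB : ∑ j ∈ Finset.univ.erase u, c u j ≤
      ∑ j ∈ Finset.univ.erase u, wcost c (p j) := by
    apply Finset.sum_le_sum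
    intro j hj
    exact cost_le_wcost hsym hpos htri ((Finset.mem_erase.mp hj).1.symm) (p j)
  have stepC : ∑ j ∈ Finset.univ.erase u, wcost c (p j) =
      ∑ i, ∑ i', (cnt i i' : ℝ) * c i i' := by
    have : ∀ j ∈ Finset.univ.erase u, wcost c (p j) =
        ∑ i, ∑ i', if (i, i') ∈ (p j).darts.map SimpleGraph.Dart.toProd
          then c i i' else 0 := fun j _ => wcost_eq c (hppath j)
    rw [Finset.sum_congr rfl this, Finset.sum_comm]
    apply Finset.sum_congr rfl
    intro i _
    rw [Finset.sum_comm]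
    apply Finset.sum_congr rfl
    intro i' _
    rw [← Finset.sum_filter]
    rw [Finset.sum_const, nsmul_eq_mul]
  -- Step D : per ordered pair bound
  have stepD : ∀ i i' : Fin N, K * ((cnt i i' : ℝ) * c i i') ≤
      (if H.Adj i i' ∧ u ∈ sideSet H i i' then
        (mu H i i' * (1 - mu H i i')) ^ α * c i i' else 0) := by
    intro i i'
    by_cases hc0 : cnt i i' = 0
    · rw [hc0]
      simp only [Nat.cast_zero, zero_mul, mul_zero]
      by_cases hcond : H.Adj i i' ∧ u ∈ sideSet H i i'
      · rw [if_pos hcond]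
        obtain ⟨h1, h2⟩ := mu_pair hT hN hcond.1
        have : 0 ≤ mu H i i' * (1 - mu H i i') := by
          rw [h2, h1]; positivity
        exact mul_nonneg (Real.rpow_nonneg this α) (hpos i i')
      · rw [if_neg hcond]
    · -- there is a path through the dart (i,i')
      have hne : ((Finset.univ.erase u).filter
          (fun j => (i, i') ∈ (p j).darts.map SimpleGraph.Dart.toProd)).Nonempty := by
        rw [← Finset.card_pos]
        show 0 < cnt i i'
        omega
      obtain ⟨j₀, hj₀⟩ := hne
      rw [Finset.mem_filter] at hj₀
      obtain ⟨-, hd₀⟩ := hj₀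
      obtain ⟨d₀, hd₀m, hd₀p⟩ := List.mem_map.mp hd₀
      have hadj : H.Adj i i' := by
        have := d₀.adj
        rwa [show d₀.toProd.1 = i by rw [hd₀p], show d₀.toProd.2 = i' by rw [hd₀p]] at this
      have huS : u ∈ sideSet H i i' := by
        rcases sideSet_mem_or hT.isConnected u (a := i) (b := i') with h | h
        · exact h
        · exact absurd (dart_not_far hT (hppath j₀) h hd₀) id
      rw [if_pos ⟨hadj, huS⟩]
      -- notation
      set k := (sideSet H i i').ncard with hk
      set m := (sideSet H i' i).ncard with hm
      have hk1 : 1 ≤ k := by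
        rw [hk]
        have : (sideSet H i i').Nonempty := ⟨i, mem_sideSet_self⟩
        have := (Set.ncard_pos (Set.toFinite _)).mpr this
        omega
      have hm1 : 1 ≤ m := by
        rw [hm]
        have : (sideSet H i' i).Nonempty := ⟨i', mem_sideSet_self⟩
        have := (Set.ncard_pos (Set.toFinite _)).mpr this
        omega
      have hkm : k + m = N := sideSet_ncard_add hT hadj
      have h2m : 2 * m ≤ N := hcent i i' hadj huS
      -- count bounded by far side
      have hcntle : cnt i i' ≤ m := by
        rw [hcnt, hm, Set.ncard_eq_toFinset_card']
        apply Finset.card_le_card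
        intro j hj
        rw [Finset.mem_filter] at hj
        obtain ⟨-, hd⟩ := hj
        obtain ⟨d, hdm, hdp⟩ := List.mem_map.mp hd
        have he : s(i, i') ∈ (p j).edges := by
          have : d.edge ∈ (p j).darts.map SimpleGraph.Dart.edge := List.mem_map_of_mem hdm
          rwa [show d.edge = s(i, i') by rw [SimpleGraph.Dart.edge, hdp]] at this
        rw [Set.mem_toFinset]
        exact far_of_edge hT hadj (hppath j) huS he
      -- weight
      have hw : mu H i i' * (1 - mu H i i') = ((k:ℝ) * (m:ℝ)) / (N:ℝ) ^ 2 := by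
        obtain ⟨h1, h2⟩ := mu_pair hT hN hadj
        rw [h2, h1, ← hk, ← hm, div_mul_div_comm, ← sq]
      rw [hw]
      have hkey' := hkey k m hk1 hm1 hkm h2m
      calc K * ((cnt i i' : ℝ) * c i i') ≤ K * ((m : ℝ) * c i i') := by
            apply mul_le_mul_of_nonneg_left _ hK0
            apply mul_le_mul_of_nonneg_right _ (hpos i i')
            exact_mod_cast hcntle
        _ = (K * m) * c i i' := by ring
        _ ≤ (((k:ℝ) * (m:ℝ)) / (N:ℝ) ^ 2) ^ α * c i i' :=
            mul_le_mul_of_nonneg_right hkey' (hpos i i')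
  -- assembly
  rw [star_cost hN u hsym α, ← hKdef, cst_halfsum hT hN hsym u α]
  calc K * ∑ j ∈ Finset.univ.erase u, c u j
      ≤ K * ∑ j ∈ Finset.univ.erase u, wcost c (p j) :=
        mul_le_mul_of_nonneg_left stepB hK0
    _ = ∑ i, ∑ i', K * ((cnt i i' : ℝ) * c i i') := by
        rw [stepC, Finset.mul_sum]
        exact Finset.sum_congr rfl fun i _ => by rw [Finset.mul_sum]
    _ ≤ ∑ i, ∑ i', (if H.Adj i i' ∧ u ∈ sideSet H i i' then
          (mu H i i' * (1 - mu H i i')) ^ α * c i i' else 0) :=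
        Finset.sum_le_sum fun i _ => Finset.sum_le_sum fun i' _ => stepD i i'

/-- reduction of the key inequality -/
lemma key_reduce {N : ℕ} (hN3 : 3 ≤ N) {α : ℝ}
    (h2 : ∀ k m : ℕ, 1 ≤ k → 2 ≤ m → k + m = N → 2 * m ≤ N →
      (m:ℝ) ≤ (((k:ℝ) * m) / ((N:ℝ) - 1)) ^ α) :
    ∀ k m : ℕ, 1 ≤ k → 1 ≤ m → k + m = N → 2 * m ≤ N →
      (((N:ℝ) - 1) / (N:ℝ) ^ 2) ^ α * m ≤ (((k:ℝ) * (m:ℝ)) / (N:ℝ) ^ 2) ^ α := by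
  intro k m hk hm hkm h2m
  have hn3 : (3:ℝ) ≤ N := by exact_mod_cast hN3
  have hn1 : (0:ℝ) < (N:ℝ) - 1 := by linarith
  have hn2 : (0:ℝ) < (N:ℝ) ^ 2 := by positivity
  have hk0 : (0:ℝ) < k := by exact_mod_cast hk
  have hm0 : (0:ℝ) < m := by exact_mod_cast hm
  have hmain : (m:ℝ) ≤ (((k:ℝ) * m) / ((N:ℝ) - 1)) ^ α := by
    rcases Nat.lt_or_ge m 2 with hm2 | hm2
    · -- m = 1
      have hm1 : m = 1 := by omega
      have hkN : k = N - 1 := by omega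
      have hkR : (k:ℝ) = (N:ℝ) - 1 := by
        rw [hkN]
        have : (1:ℕ) ≤ N := by omega
        push_cast [Nat.cast_sub this]
        ring
      rw [hm1, hkR]
      push_cast
      rw [mul_one, div_self (ne_of_gt hn1), Real.one_rpow]
    · exact h2 k m hk hm2 hkm h2m
  have hsplit : ((k:ℝ) * (m:ℝ)) / (N:ℝ) ^ 2 =
      (((N:ℝ) - 1) / (N:ℝ) ^ 2) * (((k:ℝ) * m) / ((N:ℝ) - 1)) := by
    field_simp
  rw [hsplit, Real.mul_rpow (by positivity) (by positivity)]
  exact mul_le_mul_of_nonneg_left hmain (Real.rpow_nonneg (by positivity) α)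

lemma key_alpha {N : ℕ} (hN3 : 3 ≤ N) {α : ℝ}
    (hα : Real.logb ((N:ℝ) / ((N:ℝ) - 1)) N ≤ α) :
    ∀ k m : ℕ, 1 ≤ k → 1 ≤ m → k + m = N → 2 * m ≤ N →
      (((N:ℝ) - 1) / (N:ℝ) ^ 2) ^ α * m ≤ (((k:ℝ) * (m:ℝ)) / (N:ℝ) ^ 2) ^ α := by
  have hn3 : (3:ℝ) ≤ N := by exact_mod_cast hN3
  have hn1 : (0:ℝ) < (N:ℝ) - 1 := by linarith
  have hx1 : 1 < (N:ℝ) / ((N:ℝ) - 1) := by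
    rw [lt_div_iff₀ hn1]; linarith
  have hx0 : (0:ℝ) < (N:ℝ) / ((N:ℝ) - 1) := by linarith
  have hα0 : 0 < α :=
    lt_of_lt_of_le (Real.logb_pos hx1 (by linarith)) hα
  apply key_reduce hN3
  intro k m hk hm2 hkm h2m
  have hk0 : (0:ℝ) < k := by exact_mod_cast hk
  have hm0 : (2:ℝ) ≤ m := by exact_mod_cast hm2
  have h2k : N ≤ 2 * k := by omega
  have h2kR : (N:ℝ) ≤ 2 * k := by exact_mod_cast h2k
  have hmN : (m:ℝ) ≤ (N:ℝ) := by
    have : m ≤ N := by omega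
    exact_mod_cast this
  have hb : (N:ℝ) / ((N:ℝ) - 1) ≤ ((k:ℝ) * m) / ((N:ℝ) - 1) := by
    gcongr
    nlinarith
  calc (m:ℝ) ≤ (N:ℝ) := hmN
    _ = ((N:ℝ) / ((N:ℝ) - 1)) ^ Real.logb ((N:ℝ) / ((N:ℝ) - 1)) N :=
        (Real.rpow_logb hx0 (ne_of_gt hx1) (by linarith)).symm
    _ ≤ ((N:ℝ) / ((N:ℝ) - 1)) ^ α := (Real.rpow_le_rpow_left_iff hx1).mpr hα
    _ ≤ (((k:ℝ) * m) / ((N:ℝ) - 1)) ^ α := Real.rpow_le_rpow (le_of_lt hx0) hb (le_of_lt hα0)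

set_option maxHeartbeats 1000000 in
lemma key_bigN {α : ℝ} (hα : 1 < α) :
    ∃ N₀ : ℕ, ∀ N : ℕ, N₀ ≤ N → 3 ≤ N →
    ∀ k m : ℕ, 1 ≤ k → 1 ≤ m → k + m = N → 2 * m ≤ N →
      (((N:ℝ) - 1) / (N:ℝ) ^ 2) ^ α * m ≤ (((k:ℝ) * (m:ℝ)) / (N:ℝ) ^ 2) ^ α := by
  have hα0 : (0:ℝ) < α := by linarith
  have hα1 : (0:ℝ) < α - 1 := by linarith
  set M : ℝ := (2:ℝ) ^ (α / (α - 1)) with hM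
  set δ : ℝ := (2:ℝ) ^ ((1 - α) / α) with hδ
  have hM0 : 0 < M := Real.rpow_pos_of_pos (by norm_num) _
  have hδ0 : 0 < δ := Real.rpow_pos_of_pos (by norm_num) _
  have hδ1 : δ < 1 := by
    apply Real.rpow_lt_one_of_one_lt_of_neg (by norm_num)
    apply div_neg_of_neg_of_pos (by linarith) hα0
  clear_value M δ
  refine ⟨⌈(M + 1) / (1 - δ)⌉₊, fun N hN0 hN3 => ?_⟩
  have hn3 : (3:ℝ) ≤ N := by exact_mod_cast hN3
  have hn1 : (0:ℝ) < (N:ℝ) - 1 := by linarith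
  have hnM : (M + 1) / (1 - δ) ≤ (N:ℝ) :=
    le_trans (Nat.le_ceil _) (by exact_mod_cast hN0)
  have hnM' : M + 1 ≤ (N:ℝ) * (1 - δ) := by
    rw [div_le_iff₀ (by linarith)] at hnM
    linarith
  apply key_reduce hN3
  intro k m hk hm2 hkm h2m
  have hk0 : (0:ℝ) < k := by exact_mod_cast hk
  have hm0 : (2:ℝ) ≤ m := by exact_mod_cast hm2
  have hmpos : (0:ℝ) < m := by linarith
  have h2k : N ≤ 2 * k := by omega
  have h2kR : (N:ℝ) ≤ 2 * k := by exact_mod_cast h2k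
  have hkR : (k:ℝ) = (N:ℝ) - m := by
    have : (k:ℝ) + m = N := by exact_mod_cast hkm
    linarith
  set b : ℝ := ((k:ℝ) * m) / ((N:ℝ) - 1) with hbdef
  clear_value b
  -- m^(α-1) facts
  have hmpow : (m:ℝ) ^ α = (m:ℝ) ^ (α - 1) * m := by
    conv_lhs => rw [show α = (α - 1) + 1 by ring]
    rw [Real.rpow_add hmpos, Real.rpow_one]
  rcases le_or_gt M (m:ℝ) with hcase | hcase
  · -- m large : b ≥ m/2 and (m/2)^α ≥ m
    have hb2 : (m:ℝ) / 2 ≤ b := by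
      rw [hbdef, le_div_iff₀ hn1]
      nlinarith
    have hmM : (M:ℝ) ^ (α - 1) ≤ (m:ℝ) ^ (α - 1) :=
      Real.rpow_le_rpow (le_of_lt hM0) hcase (by linarith)
    have hMα : (M:ℝ) ^ (α - 1) = (2:ℝ) ^ α := by
      rw [hM, ← Real.rpow_mul (by norm_num)]
      rw [div_mul_cancel₀ _ (ne_of_gt hα1)]
    have h2α0 : (0:ℝ) < (2:ℝ) ^ α := Real.rpow_pos_of_pos (by norm_num) _
    have hm2α : (m:ℝ) ≤ ((m:ℝ) / 2) ^ α := by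
      rw [Real.div_rpow (by linarith) (by norm_num), le_div_iff₀ h2α0, hmpow]
      rw [hMα] at hmM
      nlinarith
    calc (m:ℝ) ≤ ((m:ℝ) / 2) ^ α := hm2α
      _ ≤ b ^ α := Real.rpow_le_rpow (by linarith) hb2 (le_of_lt hα0)
  · -- m < M : b ≥ m * (n - M)/(n-1) ≥ m * δ
    have hnM2 : M + 1 ≤ (N:ℝ) := by nlinarith
    set t : ℝ := ((N:ℝ) - M) / ((N:ℝ) - 1) with ht
    clear_value t
    have hδt : δ ≤ t := by
      rw [ht, le_div_iff₀ hn1]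
      nlinarith
    have ht0 : 0 < t := lt_of_lt_of_le hδ0 hδt
    have hbt : (m:ℝ) * t ≤ b := by
      rw [hbdef, ht, hkR, ← mul_div_assoc, div_le_div_iff₀ hn1 hn1]
      have hfac : ((N:ℝ) - M) ≤ ((N:ℝ) - ↑m) := by linarith
      nlinarith [mul_le_mul_of_nonneg_right
        (mul_le_mul_of_nonneg_left hfac (le_of_lt hmpos)) (le_of_lt hn1)]
    have hδα : δ ^ α = (2:ℝ) ^ (1 - α) := by
      rw [hδ, ← Real.rpow_mul (by norm_num)]
      rw [div_mul_cancel₀ _ (ne_of_gt hα0)]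
    have hm21 : (2:ℝ) ^ (α - 1) ≤ (m:ℝ) ^ (α - 1) :=
      Real.rpow_le_rpow (by norm_num) hm0 (by linarith)
    have hmt : (m:ℝ) ≤ ((m:ℝ) * t) ^ α := by
      rw [Real.mul_rpow (by linarith) (le_of_lt ht0)]
      have h1 : δ ^ α ≤ t ^ α := Real.rpow_le_rpow (le_of_lt hδ0) hδt (le_of_lt hα0)
      have h2 : (2:ℝ) ^ (α - 1) * (2:ℝ) ^ (1 - α) = 1 := by
        rw [← Real.rpow_add (by norm_num)]
        norm_num
      have h3 : (m:ℝ) ^ (α - 1) * m * ((2:ℝ) ^ (1 - α)) ≥ m := by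
        have h2a : (0:ℝ) < (2:ℝ) ^ (1 - α) := Real.rpow_pos_of_pos (by norm_num) _
        have h5 : (1:ℝ) ≤ (m:ℝ) ^ (α - 1) * (2:ℝ) ^ (1 - α) := by
          nlinarith [mul_le_mul_of_nonneg_right hm21 (le_of_lt h2a)]
        nlinarith [mul_le_mul_of_nonneg_left h5 (le_of_lt hmpos)]
      rw [hδα] at h1
      have h4 : (0:ℝ) ≤ (m:ℝ) ^ α := Real.rpow_nonneg (by linarith) α
      calc (m:ℝ) ≤ (m:ℝ) ^ (α - 1) * m * ((2:ℝ) ^ (1 - α)) := h3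
        _ = (m:ℝ) ^ α * (2:ℝ) ^ (1 - α) := by rw [hmpow]
        _ ≤ (m:ℝ) ^ α * t ^ α := by
            apply mul_le_mul_of_nonneg_left _ h4
            exact le_trans (le_of_eq rfl) h1
    calc (m:ℝ) ≤ ((m:ℝ) * t) ^ α := hmt
      _ ≤ b ^ α := Real.rpow_le_rpow (by positivity) hbt (le_of_lt hα0)


/-- Main construction lemma: given the key numeric inequality, an optimal CST exists
and is a star tree. -/
lemma main_of_key {N : ℕ} (hN3 : 3 ≤ N) {α : ℝ}
    (hkey : ∀ k m : ℕ, 1 ≤ k → 1 ≤ m → k + m = N → 2 * m ≤ N →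
      (((N:ℝ) - 1) / (N:ℝ) ^ 2) ^ α * m ≤ (((k:ℝ) * (m:ℝ)) / (N:ℝ) ^ 2) ^ α)
    (c : Fin N → Fin N → ℝ) (hsym : ∀ i j, c i j = c j i) (hpos : ∀ i j, 0 ≤ c i j)
    (htri : ∀ u k v : Fin N, u ≠ k → u ≠ v → k ≠ v → c k u ≤ c k v + c u v) :
    ∃ G : SimpleGraph (Fin N), G.IsTree ∧ (∃ u : Fin N, G = starGraph u) ∧
      ∀ H : SimpleGraph (Fin N), H.IsTree → cstCost G c α ≤ cstCost H c α := by
  classical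
  have hN : 0 < N := by omega
  have : Nonempty (Fin N) := ⟨⟨0, hN⟩⟩
  obtain ⟨u₀, -, hmin⟩ := Finset.exists_min_image Finset.univ
    (fun u => cstCost (starGraph u) c α) Finset.univ_nonempty
  refine ⟨starGraph u₀, star_tree hN u₀, ⟨u₀, rfl⟩, fun H hT => ?_⟩
  obtain ⟨u, hu⟩ := star_le_tree hN3 hkey hsym hpos htri hT
  exact le_trans (hmin u (Finset.mem_univ u)) hu

theorem cst_star_limit_alpha_and_N :
    (∀ N : ℕ, 3 ≤ N → ∃ α₀ : ℝ, ∀ α : ℝ, α₀ ≤ α →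
      ∀ c : Fin N → Fin N → ℝ, (∀ i j, c i j = c j i) → (∀ i j, 0 ≤ c i j) →
        (∀ u k v : Fin N, u ≠ k → u ≠ v → k ≠ v → c k u ≤ c k v + c u v) →
        ∃ G : SimpleGraph (Fin N), G.IsTree ∧ (∃ u : Fin N, G = starGraph u) ∧
          ∀ H : SimpleGraph (Fin N), H.IsTree → cstCost G c α ≤ cstCost H c α) ∧
    (∀ α : ℝ, 1 < α → ∃ N₀ : ℕ, ∀ N : ℕ, N₀ ≤ N → 3 ≤ N →
      ∀ c : Fin N → Fin N → ℝ, (∀ i j, c i j = c j i) → (∀ i j, 0 ≤ c i j) →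
        (∀ u k v : Fin N, u ≠ k → u ≠ v → k ≠ v → c k u ≤ c k v + c u v) →
        ∃ G : SimpleGraph (Fin N), G.IsTree ∧ (∃ u : Fin N, G = starGraph u) ∧
          ∀ H : SimpleGraph (Fin N), H.IsTree → cstCost G c α ≤ cstCost H c α) := by
  constructor
  · intro N hN3
    refine ⟨Real.logb ((N:ℝ) / ((N:ℝ) - 1)) N, fun α hα c hsym hpos htri => ?_⟩
    exact main_of_key hN3 (key_alpha hN3 hα) c hsym hpos htri
  · intro α hα
    obtain ⟨N₀, hN₀⟩ := key_bigN hα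
    refine ⟨N₀, fun N hN0 hN3 c hsym hpos htri => ?_⟩
    exact main_of_key hN3 (hN₀ N hN0 hN3) c hsym hpos htri
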